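/- Let D > 0 and ρ > 0, and set θ(x,t) = (1/2) √(3ρ/(2D)) ( x − √(ρD/6) t ). The pair u(x,t) = (1/2)(1 + tanh θ(x,t)), v(x,t) = (3/4)(1 − tanh θ(x,t))² satisfies the Lotka–Volterra competition-diffusion system ∂u/∂t = D ∂²u/∂x² + ρ u(1 − u − v) and ∂v/∂t = (D/3) ∂²v/∂x² + ρ v(3 − 4u − v) at every point (x,t) ∈ ℝ². -/

import Mathlib

/-- The traveling wave phase variable for the Lotka–Volterra system. -/
noncomputable def lvTheta (D ρ x t : ℝ) : ℝ :=
  (1 / 2) * Real.sqrt (3 * ρ / (2 * D)) * (x - Real.sqrt (ρ * D / 6) * t)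

/-- The first component of the Lotka–Volterra traveling wave. -/
noncomputable def lvU (D ρ x t : ℝ) : ℝ := (1 / 2) * (1 + Real.tanh (lvTheta D ρ x t))

/-- The second component of the Lotka–Volterra traveling wave. -/
noncomputable def lvV (D ρ x t : ℝ) : ℝ := (3 / 4) * (1 - Real.tanh (lvTheta D ρ x t)) ^ 2

lemma tanh_hasDerivAt' (y : ℝ) : HasDerivAt Real.tanh (1 - Real.tanh y ^ 2) y := by
  have hc : Real.cosh y ≠ 0 := (Real.cosh_pos y).ne'
  have h := (Real.hasDerivAt_sinh y).div (Real.hasDerivAt_cosh y) hc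
  have heq : Real.tanh = fun z : ℝ => Real.sinh z / Real.cosh z :=
    funext fun z => Real.tanh_eq_sinh_div_cosh z
  rw [heq]
  refine h.congr_deriv ?_
  have h2 := Real.cosh_sq_sub_sinh_sq y
  field_simp

lemma lvTheta_x_hasDerivAt (D ρ t : ℝ) (y : ℝ) :
    HasDerivAt (fun y => lvTheta D ρ y t) ((1 / 2) * Real.sqrt (3 * ρ / (2 * D))) y := by
  have h := ((hasDerivAt_id y).sub_const (Real.sqrt (ρ * D / 6) * t)).const_mul
    ((1 / 2) * Real.sqrt (3 * ρ / (2 * D)))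
  simpa only [mul_one, lvTheta, id] using h

lemma lvTheta_t_hasDerivAt (D ρ x : ℝ) (s : ℝ) :
    HasDerivAt (fun s => lvTheta D ρ x s)
      (-((1 / 2) * Real.sqrt (3 * ρ / (2 * D)) * Real.sqrt (ρ * D / 6))) s := by
  have h : HasDerivAt (fun s : ℝ => x - Real.sqrt (ρ * D / 6) * s)
      (-(Real.sqrt (ρ * D / 6) * 1)) s :=
    ((hasDerivAt_id s).const_mul (Real.sqrt (ρ * D / 6))).const_sub x
  have h2 := h.const_mul ((1 / 2) * Real.sqrt (3 * ρ / (2 * D)))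
  refine h2.congr_deriv ?_
  ring

/-- The Lotka–Volterra traveling wave pair satisfies the competition-diffusion system
∂u/∂t = D ∂²u/∂x² + ρ u (1 − u − v), ∂v/∂t = (D/3) ∂²v/∂x² + ρ v (3 − 4u − v) everywhere. -/
theorem lvWave_solves_lotkaVolterra (D ρ : ℝ) (hD : 0 < D) (hρ : 0 < ρ) (x t : ℝ) :
    deriv (fun s => lvU D ρ x s) t =
      D * iteratedDeriv 2 (fun y => lvU D ρ y t) x +
        ρ * lvU D ρ x t * (1 - lvU D ρ x t - lvV D ρ x t) ∧
    deriv (fun s => lvV D ρ x s) t =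
      (D / 3) * iteratedDeriv 2 (fun y => lvV D ρ y t) x +
        ρ * lvV D ρ x t * (3 - 4 * lvU D ρ x t - lvV D ρ x t) := by
  set s0 : ℝ := Real.sqrt (3 * ρ / (2 * D)) with hs0
  set c0 : ℝ := Real.sqrt (ρ * D / 6) with hc0
  -- key constants
  have h1 : s0 * c0 = ρ / 2 := by
    rw [hs0, hc0, ← Real.sqrt_mul (by positivity)]
    have : 3 * ρ / (2 * D) * (ρ * D / 6) = (ρ / 2) ^ 2 := by
      field_simp
      ring
    rw [this, Real.sqrt_sq (by positivity)]
  have h2 : s0 ^ 2 * D = 3 * ρ / 2 := by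
    rw [hs0, Real.sq_sqrt (by positivity)]
    field_simp
  set T : ℝ := Real.tanh (lvTheta D ρ x t) with hT
  -- tanh composed with phase, in t
  have hTt : HasDerivAt (fun s => Real.tanh (lvTheta D ρ x s))
      ((1 - T ^ 2) * (-((1 / 2) * s0 * c0))) t :=
    (tanh_hasDerivAt' _).comp t (lvTheta_t_hasDerivAt D ρ x t)
  -- tanh composed with phase, in y
  have hTy : ∀ y, HasDerivAt (fun y => Real.tanh (lvTheta D ρ y t))
      ((1 - Real.tanh (lvTheta D ρ y t) ^ 2) * ((1 / 2) * s0)) y :=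
    fun y => (tanh_hasDerivAt' _).comp y (lvTheta_x_hasDerivAt D ρ t y)
  -- time derivatives
  have hUt : deriv (fun s => lvU D ρ x s) t
      = (1 / 2) * ((1 - T ^ 2) * (-((1 / 2) * s0 * c0))) :=
    ((hTt.const_add 1).const_mul (1 / 2)).deriv
  have hVt : deriv (fun s => lvV D ρ x s) t
      = (3 / 4) * (2 * (1 - T) ^ 1 * (-((1 - T ^ 2) * (-((1 / 2) * s0 * c0))))) :=
    (((hTt.const_sub 1).pow 2).const_mul (3 / 4)).deriv
  -- first space derivatives as functions
  have hUy : ∀ y, HasDerivAt (fun y => lvU D ρ y t)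
      ((1 / 2) * ((1 - Real.tanh (lvTheta D ρ y t) ^ 2) * ((1 / 2) * s0))) y :=
    fun y => ((hTy y).const_add 1).const_mul (1 / 2)
  have hUderiv : deriv (fun y => lvU D ρ y t)
      = fun y => (1 / 2) * ((1 - Real.tanh (lvTheta D ρ y t) ^ 2) * ((1 / 2) * s0)) :=
    funext fun y => (hUy y).deriv
  have hVy : ∀ y, HasDerivAt (fun y => lvV D ρ y t)
      ((3 / 4) * (2 * (1 - Real.tanh (lvTheta D ρ y t)) ^ 1 *
        (-((1 - Real.tanh (lvTheta D ρ y t) ^ 2) * ((1 / 2) * s0))))) y :=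
    fun y => (((hTy y).const_sub 1).pow 2).const_mul (3 / 4)
  have hVderiv : deriv (fun y => lvV D ρ y t)
      = fun y => (3 / 4) * (2 * ((1 - Real.tanh (lvTheta D ρ y t)) ^ 1 *
        (-((1 - Real.tanh (lvTheta D ρ y t) ^ 2) * ((1 / 2) * s0))))) := by
    funext y
    rw [(hVy y).deriv]
    ring
  -- second space derivative of u
  have hUxx : HasDerivAt (fun y => (1 / 2) * ((1 - Real.tanh (lvTheta D ρ y t) ^ 2) * ((1 / 2) * s0)))
      ((1 / 2) * ((-(2 * T ^ 1 * ((1 - T ^ 2) * ((1 / 2) * s0)))) * ((1 / 2) * s0))) x :=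
    ((((hTy x).pow 2).const_sub 1).mul_const ((1 / 2) * s0)).const_mul (1 / 2)
  -- second space derivative of v
  have hVxx : HasDerivAt (fun y => (3 / 4) * (2 * ((1 - Real.tanh (lvTheta D ρ y t)) ^ 1 *
      (-((1 - Real.tanh (lvTheta D ρ y t) ^ 2) * ((1 / 2) * s0))))))
      ((3 / 4) * (2 * ((1 * (1 - T) ^ 0 * (-((1 - T ^ 2) * ((1 / 2) * s0)))) *
          (-((1 - T ^ 2) * ((1 / 2) * s0))) +
        (1 - T) ^ 1 * (-((-(2 * T ^ 1 * ((1 - T ^ 2) * ((1 / 2) * s0)))) * ((1 / 2) * s0)))))) x := by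
    have h := (((((hTy x).const_sub 1).pow 1).mul
      ((((((hTy x).pow 2).const_sub 1).mul_const ((1 / 2) * s0)).neg))).const_mul 2).const_mul (3 / 4)
    refine h.congr_deriv ?_
    simp only [Pi.neg_apply, Pi.pow_apply]
    push_cast
    ring
  have hIU : iteratedDeriv 2 (fun y => lvU D ρ y t) x
      = (1 / 2) * ((-(2 * T ^ 1 * ((1 - T ^ 2) * ((1 / 2) * s0)))) * ((1 / 2) * s0)) := by
    rw [iteratedDeriv_succ, iteratedDeriv_one, hUderiv]
    exact hUxx.deriv
  have hIV : iteratedDeriv 2 (fun y => lvV D ρ y t) x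
      = (3 / 4) * (2 * ((1 * (1 - T) ^ 0 * (-((1 - T ^ 2) * ((1 / 2) * s0)))) *
          (-((1 - T ^ 2) * ((1 / 2) * s0))) +
        (1 - T) ^ 1 * (-((-(2 * T ^ 1 * ((1 - T ^ 2) * ((1 / 2) * s0)))) * ((1 / 2) * s0))))) := by
    rw [iteratedDeriv_succ, iteratedDeriv_one, hVderiv]
    exact hVxx.deriv
  constructor
  · rw [hUt, hIU, lvU, lvV, ← hT]
    linear_combination (-(1 / 4) * (1 - T ^ 2)) * h1 + ((1 / 4) * T * (1 - T ^ 2)) * h2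
  · rw [hVt, hIV, lvU, lvV, ← hT]
    linear_combination ((3 / 4) * (1 - T) * (1 - T ^ 2)) * h1 +
      (-(1 / 8) * (1 - T ^ 2) * (1 - T) * (1 + 3 * T)) * h2
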